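/- Let g : [0,1] → ℝ be three times differentiable and convex with g''(0) > 0 and suppose, for some S ≥ 1, |g'''(t)| ≤ S·g''(t)/(1−St) for all 0 ≤ t < 1/S. Then g''(0)/(3S²) ≤ g(1/S) − g(0) − g'(0)/S ≤ g''(0)/S². -/

import Mathlib

/-- Lemma (mine-1d), value at t = 1/S: bracketing under
|g'''(t)| ≤ S·g''(t)/(1−St) on [0, 1/S). -/
theorem stmt_4 (g : ℝ → ℝ) (S : ℝ) (hS : 1 ≤ S)
    (hg : ContDiffOn ℝ 3 g (Set.Icc 0 1))
    (hconv : ConvexOn ℝ (Set.Icc 0 1) g)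
    (h0 : 0 < iteratedDerivWithin 2 g (Set.Icc 0 1) 0)
    (hsc : ∀ t : ℝ, 0 ≤ t → t < 1 / S →
      |iteratedDerivWithin 3 g (Set.Icc 0 1) t| ≤
        S * iteratedDerivWithin 2 g (Set.Icc 0 1) t / (1 - S * t)) :
    iteratedDerivWithin 2 g (Set.Icc 0 1) 0 / (3 * S ^ 2)
      ≤ g (1 / S) - g 0 - iteratedDerivWithin 1 g (Set.Icc 0 1) 0 / S ∧
    g (1 / S) - g 0 - iteratedDerivWithin 1 g (Set.Icc 0 1) 0 / S
      ≤ iteratedDerivWithin 2 g (Set.Icc 0 1) 0 / S ^ 2 := by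
  have hSpos : (0:ℝ) < S := lt_of_lt_of_le one_pos hS
  set s : Set ℝ := Set.Icc (0:ℝ) 1 with hsdef
  have hu : UniqueDiffOn ℝ s := uniqueDiffOn_Icc one_pos
  set D1 := derivWithin g s with hD1def
  set D2 := derivWithin D1 s with hD2def
  set D3 := derivWithin D2 s with hD3def
  set c := 1 / S with hcdef
  have hc0 : (0:ℝ) < c := by positivity
  have hc1 : c ≤ 1 := by rw [hcdef]; exact (div_le_one hSpos).2 hS
  have hSc : S * c = 1 := by rw [hcdef, mul_one_div_cancel hSpos.ne']
  have hsub : Set.Icc (0:ℝ) c ⊆ s := Set.Icc_subset_Icc le_rfl hc1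
  -- smoothness of the successive derivatives
  have hg1 : ContDiffOn ℝ 2 D1 s := hg.derivWithin hu (by norm_num)
  have hg2 : ContDiffOn ℝ 1 D2 s := hg1.derivWithin hu (by norm_num)
  have hgdiff : DifferentiableOn ℝ g s := hg.differentiableOn (by norm_num)
  have hD1diff : DifferentiableOn ℝ D1 s := hg1.differentiableOn (by norm_num)
  have hD2diff : DifferentiableOn ℝ D2 s := hg2.differentiableOn (by norm_num)
  have hD2cont : ContinuousOn D2 s := hD2diff.continuousOn
  -- identification of the iterated derivatives
  have e1 : ∀ x ∈ s, iteratedDerivWithin 1 g s x = D1 x := fun x hx => by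
    rw [iteratedDerivWithin_one]
  have e2 : ∀ x ∈ s, iteratedDerivWithin 2 g s x = D2 x := fun x hx => by
    have : (2:ℕ) = 1 + 1 := rfl
    rw [this, iteratedDerivWithin_succ]
    exact derivWithin_congr e1 (e1 x hx)
  have e3 : ∀ x ∈ s, iteratedDerivWithin 3 g s x = D3 x := fun x hx => by
    have : (3:ℕ) = 2 + 1 := rfl
    rw [this, iteratedDerivWithin_succ]
    exact derivWithin_congr e2 (e2 x hx)
  have h0' : 0 < D2 0 := by
    rw [← e2 0 (by constructor <;> norm_num)]; exact h0
  have hsc' : ∀ t, 0 ≤ t → t < c → |D3 t| ≤ S * D2 t / (1 - S * t) := by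
    intro t ht0 htc
    have hts : t ∈ s := ⟨ht0, le_trans htc.le hc1⟩
    rw [← e3 t hts, ← e2 t hts]
    exact hsc t ht0 htc
  have hden : ∀ t : ℝ, t < c → 0 < 1 - S * t := fun t htc => by
    have := mul_lt_mul_of_pos_left htc hSpos
    linarith
  have hD2nonneg : ∀ t, 0 ≤ t → t < c → 0 ≤ D2 t := by
    intro t ht0 htc
    have h1 := hden t htc
    have h2 : (0:ℝ) ≤ S * D2 t / (1 - S * t) := (abs_nonneg (D3 t)).trans (hsc' t ht0 htc)
    rcases div_nonneg_iff.mp h2 with ⟨ha, _⟩ | ⟨_, hb⟩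
    · nlinarith
    · linarith
  -- derivatives as genuine derivatives at interior points
  have hmem : ∀ t ∈ Set.Ioo (0:ℝ) c, s ∈ nhds t := fun t ht =>
    Filter.mem_of_superset (Ioo_mem_nhds ht.1 (lt_of_lt_of_le ht.2 hc1))
      Set.Ioo_subset_Icc_self
  have hins : ∀ t ∈ Set.Ioo (0:ℝ) c, t ∈ s := fun t ht =>
    hsub (Set.Ioo_subset_Icc_self ht)
  have hD1at : ∀ t ∈ Set.Ioo (0:ℝ) c, HasDerivAt g (D1 t) t := fun t ht =>
    ((hgdiff t (hins t ht)).hasDerivWithinAt).hasDerivAt (hmem t ht)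
  have hD2at : ∀ t ∈ Set.Ioo (0:ℝ) c, HasDerivAt D1 (D2 t) t := fun t ht =>
    ((hD1diff t (hins t ht)).hasDerivWithinAt).hasDerivAt (hmem t ht)
  have hD3at : ∀ t ∈ Set.Ioo (0:ℝ) c, HasDerivAt D2 (D3 t) t := fun t ht =>
    ((hD2diff t (hins t ht)).hasDerivWithinAt).hasDerivAt (hmem t ht)
  have hlin : ∀ t : ℝ, HasDerivAt (fun t : ℝ => 1 - S * t) (-S) t := fun t => by
    simpa using ((hasDerivAt_id t).const_mul S).const_sub 1
  -- p(t) = D2 t * (1 - S t) is antitone on [0, c]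
  have hpant : AntitoneOn (fun t => D2 t * (1 - S * t)) (Set.Icc 0 c) := by
    apply antitoneOn_of_deriv_nonpos (convex_Icc 0 c)
    · exact (hD2cont.mono hsub).mul
        (Continuous.continuousOn (continuous_const.sub (continuous_const.mul continuous_id)))
    · intro t ht
      rw [interior_Icc] at ht
      exact ((hD3at t ht).mul (hlin t)).differentiableAt.differentiableWithinAt
    · intro t ht
      rw [interior_Icc] at ht
      have hd : HasDerivAt (fun t => D2 t * (1 - S * t))
          (D3 t * (1 - S * t) + D2 t * (-S)) t := (hD3at t ht).mul (hlin t)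
      rw [hd.deriv]
      have h1 := hden t ht.2
      have h3 : D3 t ≤ S * D2 t / (1 - S * t) :=
        (le_abs_self _).trans (hsc' t ht.1.le ht.2)
      have h4 : D3 t * (1 - S * t) ≤ S * D2 t := (le_div_iff₀ h1).mp h3
      linarith
  -- q(t) = D2 t / (1 - S t) is monotone on [0, c)
  have hqmono : MonotoneOn (fun t => D2 t / (1 - S * t)) (Set.Ico 0 c) := by
    apply monotoneOn_of_deriv_nonneg (convex_Ico 0 c)
    · apply ContinuousOn.div
      · exact hD2cont.mono ((Set.Ico_subset_Icc_self).trans hsub)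
      · exact Continuous.continuousOn (continuous_const.sub (continuous_const.mul continuous_id))
      · exact fun t ht => (hden t ht.2).ne'
    · intro t ht
      rw [interior_Ico] at ht
      exact (((hD3at t ht).div (hlin t) (hden t ht.2).ne')).differentiableAt.differentiableWithinAt
    · intro t ht
      rw [interior_Ico] at ht
      have hd : HasDerivAt (fun t => D2 t / (1 - S * t))
          ((D3 t * (1 - S * t) - D2 t * (-S)) / (1 - S * t) ^ 2) t :=
        (hD3at t ht).div (hlin t) (hden t ht.2).ne'
      rw [hd.deriv]
      have h1 := hden t ht.2
      have h3 : -(S * D2 t / (1 - S * t)) ≤ D3 t := by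
        have := (neg_abs_le (D3 t))
        have h2 := hsc' t ht.1.le ht.2
        linarith
      have h4 : -(S * D2 t) ≤ D3 t * (1 - S * t) := by
        have h5 : -(D3 t) ≤ S * D2 t / (1 - S * t) := by
          have := neg_abs_le (D3 t)
          have h2 := hsc' t ht.1.le ht.2
          have := abs_nonneg (D3 t)
          have : -(D3 t) ≤ |D3 t| := neg_le_abs (D3 t)
          linarith [hsc' t ht.1.le ht.2]
        have h6 := (le_div_iff₀ h1).mp h5
        nlinarith [h6]
      have hnum : 0 ≤ D3 t * (1 - S * t) - D2 t * (-S) := by linarith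
      positivity
  -- bound for D2 on [0, c], including the endpoint
  have hup : ∀ t ∈ Set.Icc (0:ℝ) c, D2 t * (1 - S * t) ≤ D2 0 := by
    intro t ht
    have := hpant (Set.left_mem_Icc.mpr hc0.le) ht ht.1
    simpa using this
  have hlow : ∀ t ∈ Set.Icc (0:ℝ) c, D2 0 * (1 - S * t) ≤ D2 t := by
    intro t ht
    rcases eq_or_lt_of_le ht.2 with h | h
    · have h1 : 1 - S * t = 0 := by rw [h]; linarith
      rw [h1, mul_zero]
      -- D2 c ≥ 0 by continuity
      have hcs : c ∈ s := ⟨hc0.le, hc1⟩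
      have hcw : ContinuousWithinAt D2 (Set.Ico 0 c) c :=
        (hD2cont c hcs).mono ((Set.Ico_subset_Icc_self).trans hsub)
      have hne : (nhdsWithin c (Set.Ico 0 c)).NeBot := by
        apply mem_closure_iff_nhdsWithin_neBot.mp
        rw [closure_Ico hc0.ne]
        exact Set.right_mem_Icc.mpr hc0.le
      have : Filter.Tendsto D2 (nhdsWithin c (Set.Ico 0 c)) (nhds (D2 c)) := hcw
      rw [h]
      exact ge_of_tendsto this (Filter.eventually_of_mem self_mem_nhdsWithin
        (fun x hx => hD2nonneg x hx.1 hx.2))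
    · have h1 := hden t h
      have := hqmono (Set.left_mem_Ico.mpr hc0) ⟨ht.1, h⟩ ht.1
      simp only [mul_zero, sub_zero, div_one] at this
      exact (le_div_iff₀ h1).mp this
  -- FTC : g c - g 0 - c * D1 0 = ∫ t in 0..c, (c - t) * D2 t
  have hphicont : ContinuousOn (fun t => (c - t) * D2 t) (Set.Icc 0 c) :=
    (Continuous.continuousOn (continuous_const.sub continuous_id)).mul (hD2cont.mono hsub)
  have hint : IntervalIntegrable (fun t => (c - t) * D2 t) MeasureTheory.volume 0 c := by
    apply ContinuousOn.intervalIntegrable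
    rwa [Set.uIcc_of_le hc0.le]
  have hFcont : ContinuousOn (fun t => g t + (c - t) * D1 t) (Set.Icc 0 c) := by
    apply ContinuousOn.add (hgdiff.continuousOn.mono hsub)
    exact (Continuous.continuousOn (continuous_const.sub continuous_id)).mul
      ((hD1diff.continuousOn).mono hsub)
  have hFderiv : ∀ t ∈ Set.Ioo (0:ℝ) c,
      HasDerivAt (fun t => g t + (c - t) * D1 t) ((c - t) * D2 t) t := by
    intro t ht
    have h3 : HasDerivAt (fun t : ℝ => c - t) (-1) t := by
      simpa using (hasDerivAt_id t).const_sub c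
    have := (hD1at t ht).add (h3.mul (hD2at t ht))
    refine this.congr_deriv ?_
    ring
  have hftc : ∫ t in (0:ℝ)..c, (c - t) * D2 t = g c - g 0 - c * D1 0 := by
    have := intervalIntegral.integral_eq_sub_of_hasDeriv_right_of_le hc0.le hFcont
      (fun t ht => (hFderiv t ht).hasDerivWithinAt) hint
    rw [this]
    ring
  -- pointwise bounds on the integrand
  have hptup : ∀ t ∈ Set.Icc (0:ℝ) c, (c - t) * D2 t ≤ D2 0 / S := by
    intro t ht
    have h1 := hup t ht
    have h2 : c - t = (1 - S * t) / S := by field_simp; linarith [hSc]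
    rw [h2, div_mul_eq_mul_div, div_le_div_iff₀ hSpos hSpos]
    nlinarith
  have hptlow : ∀ t ∈ Set.Icc (0:ℝ) c, D2 0 * (S * (c - t) ^ 2) ≤ (c - t) * D2 t := by
    intro t ht
    have h1 := hlow t ht
    have h2 : 1 - S * t = S * (c - t) := by rw [mul_sub]; linarith [hSc]
    have h3 : 0 ≤ c - t := by linarith [ht.2]
    rw [h2] at h1
    nlinarith [mul_le_mul_of_nonneg_left h1 h3]
  -- integral comparisons
  have hintconst : IntervalIntegrable (fun _ : ℝ => D2 0 / S) MeasureTheory.volume 0 c :=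
    intervalIntegrable_const
  have hintlow : IntervalIntegrable (fun t : ℝ => D2 0 * (S * (c - t) ^ 2))
      MeasureTheory.volume 0 c :=
    Continuous.intervalIntegrable
      (continuous_const.mul (continuous_const.mul ((continuous_const.sub continuous_id).pow 2))) 0 c
  have hintup : (∫ t in (0:ℝ)..c, (c - t) * D2 t) ≤ D2 0 / S ^ 2 := by
    have := intervalIntegral.integral_mono_on hc0.le hint hintconst hptup
    rw [intervalIntegral.integral_const] at this
    calc (∫ t in (0:ℝ)..c, (c - t) * D2 t) ≤ (c - 0) • (D2 0 / S) := this
      _ = D2 0 / S ^ 2 := by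
          rw [smul_eq_mul, sub_zero, hcdef, sq]
          field_simp
  have hintlo : D2 0 / (3 * S ^ 2) ≤ ∫ t in (0:ℝ)..c, (c - t) * D2 t := by
    have hmono := intervalIntegral.integral_mono_on hc0.le hintlow hint hptlow
    have hcomp : (∫ t in (0:ℝ)..c, D2 0 * (S * (c - t) ^ 2)) = D2 0 / (3 * S ^ 2) := by
      have h1 : (∫ t in (0:ℝ)..c, D2 0 * (S * (c - t) ^ 2))
          = (D2 0 * S) * ∫ t in (0:ℝ)..c, (c - t) ^ 2 := by
        rw [← intervalIntegral.integral_const_mul]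
        congr 1 with t
        ring
      have h2 : (∫ t in (0:ℝ)..c, (c - t) ^ 2) = ∫ t in (0:ℝ)..c, t ^ 2 := by
        have := intervalIntegral.integral_comp_sub_left (fun x : ℝ => x ^ 2) c
          (a := 0) (b := c)
        simpa using this
      rw [h1, h2, integral_pow]
      have hc3 : c ^ 3 = 1 / S ^ 3 := by rw [hcdef]; field_simp
      rw [hc3]
      field_simp
      ring
    linarith [hcomp ▸ hmono]
  -- conclusion
  have hts0 : (0:ℝ) ∈ s := ⟨le_rfl, zero_le_one⟩
  rw [e1 0 hts0, e2 0 hts0]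
  have hd1 : D1 0 / S = c * D1 0 := by rw [hcdef]; ring
  constructor
  · rw [hd1]; linarith [hftc ▸ hintlo]
  · rw [hd1]; linarith [hftc ▸ hintup]
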